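/- Let |q| < 1, |ρ| < 1, and let n ≥ 0 be an integer. Then for all real x, y: ∏_{j=0}^{n-1} ω(x√(1-q)/2, y√(1-q)/2 | ρ q^j) = (ρ²;q)_{2n} · Σ_{k=0}^{n} (-1)^k [n choose k]_q q^{k(k-1)/2} (1-q)^k ρ^k Q_{k,k}(x,y|ρ,q). -/

import Mathlib

open Finset MeasureTheory

noncomputable section

/-- [n]_q = 1 + q + ... + q^{n-1} -/
def qNat (q : ℝ) (n : ℕ) : ℝ := ∑ j ∈ Finset.range n, q ^ j

/-- [n]_q! -/
def qFact (q : ℝ) : ℕ → ℝ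
  | 0 => 1
  | n + 1 => qFact q n * qNat q (n + 1)

/-- q-binomial coefficient -/
def qBinom (q : ℝ) (n k : ℕ) : ℝ :=
  if k ≤ n then qFact q n / (qFact q (n - k) * qFact q k) else 0

/-- q-Pochhammer symbol (a;q)_n -/
def qPoch (a q : ℝ) (n : ℕ) : ℝ := ∏ j ∈ Finset.range n, (1 - a * q ^ j)

/-- q-Pochhammer symbol (a;q)_∞ -/
def qPochInf (a q : ℝ) : ℝ := ∏' j : ℕ, (1 - a * q ^ j)

/-- continuous q-Hermite polynomials H_n(x|q) -/
def qHermite (q : ℝ) : ℕ → ℝ → ℝ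
  | 0, _ => 1
  | 1, x => x
  | n + 2, x => x * qHermite q (n + 1) x - qNat q (n + 1) * qHermite q n x

/-- big q-Hermite polynomials H_n(x|a,q) -/
def bigqHermite (q a : ℝ) : ℕ → ℝ → ℝ
  | 0, _ => 1
  | 1, x => x - a
  | n + 2, x => (x - a * q ^ (n + 1)) * bigqHermite q a (n + 1) x -
      qNat q (n + 1) * bigqHermite q a n x

/-- rescaled Al-Salam--Chihara polynomials P_n(x|y,ρ,q) -/
def ascP (q y ρ : ℝ) : ℕ → ℝ → ℝ
  | 0, _ => 1
  | 1, x => x - ρ * y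
  | n + 2, x => (x - ρ * y * q ^ (n + 1)) * ascP q y ρ (n + 1) x -
      qNat q (n + 1) * (1 - ρ ^ 2 * q ^ n) * ascP q y ρ n x

/-- generating function φ_H(x|t,q) of the q-Hermite polynomials -/
def phiH (q t x : ℝ) : ℝ := ∑' n : ℕ, t ^ n / qFact q n * qHermite q n x

/-- γ_{i,j}(x,y|ρ,q) -/
def gammaPM (q ρ : ℝ) (i j : ℕ) (x y : ℝ) : ℝ :=
  ∑' n : ℕ, ρ ^ n / qFact q n * qHermite q (n + i) x * qHermite q (n + j) y

/-- the polynomials Q_{i,j}(x,y|ρ,q) -/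
def Qpoly (q ρ : ℝ) (i j : ℕ) (x y : ℝ) : ℝ :=
  ∑ s ∈ Finset.range (j + 1),
    (-1 : ℝ) ^ s * q ^ (s * (s - 1) / 2) * qBinom q j s * ρ ^ s * qHermite q (j - s) y *
      ascP q y ρ (i + s) x / qPoch (ρ ^ 2) q (i + s)

/-- the interval S(q) = [-2/√(1-q), 2/√(1-q)] -/
def Sq (q : ℝ) : Set ℝ := Set.Icc (-(2 / Real.sqrt (1 - q))) (2 / Real.sqrt (1 - q))

/-- ω(x,y|ρ) -/
def omegaPM (x y ρ : ℝ) : ℝ :=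
  (1 - ρ ^ 2) ^ 2 - 4 * ρ * (1 + ρ ^ 2) * x * y + 4 * ρ ^ 2 * (x ^ 2 + y ^ 2)

/-- l(x|a) -/
def lPM (x a : ℝ) : ℝ := (1 + a) ^ 2 - 4 * a * x ^ 2

/-- the q-Normal density f_N(x|q) -/
def fN (q x : ℝ) : ℝ :=
  Real.sqrt ((1 - q) * (4 - (1 - q) * x ^ 2)) * qPochInf q q / (2 * Real.pi) *
    ∏' j : ℕ, lPM (x * Real.sqrt (1 - q) / 2) (q ^ (j + 1))

/-- the (q,ρ)-Conditional Normal density f_CN(x|y,ρ,q) -/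
def fCN (q ρ x y : ℝ) : ℝ :=
  fN q x * qPochInf (ρ ^ 2) q /
    ∏' j : ℕ, omegaPM (x * Real.sqrt (1 - q) / 2) (y * Real.sqrt (1 - q) / 2) (ρ * q ^ j)

/-- the (ρ,q)-bivariate Normal density f_{2D}(x,y|ρ,q) -/
def f2D (q ρ x y : ℝ) : ℝ := fCN q ρ x y * fN q y

namespace S11

variable {q : ℝ}

theorem qNat_succ (n : ℕ) : qNat q (n + 1) = qNat q n + q ^ n := Finset.sum_range_succ _ _

theorem qNat_zero : qNat q 0 = 0 := rfl

theorem qNat_one : qNat q 1 = 1 := by simp [qNat]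

theorem qNat_two : qNat q 2 = 1 + q := by
  rw [qNat_succ, qNat_one, pow_one]

theorem qNat_mul_one_sub (n : ℕ) : (1 - q) * qNat q n = 1 - q ^ n := by
  induction n with
  | zero => simp [qNat_zero]
  | succ m ih => rw [qNat_succ, pow_succ]; ring_nf; ring_nf at ih; linarith

theorem qNat_add (a b : ℕ) : qNat q (a + b) = qNat q a + q ^ a * qNat q b := by
  induction b with
  | zero => simp [qNat_zero]
  | succ m ih => rw [← Nat.add_assoc, qNat_succ, ih, qNat_succ, pow_add]; ring

theorem abs_pow_lt_one (hq : |q| < 1) (n : ℕ) : |q ^ n| ≤ |q| ^ n := by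
  rw [abs_pow]

theorem qpow_lt_one (hq : |q| < 1) (n : ℕ) : |q ^ n| ≤ 1 := by
  rw [abs_pow]
  exact pow_le_one₀ (abs_nonneg q) hq.le

theorem one_sub_qpow_pos (hq : |q| < 1) (n : ℕ) (hn : n ≠ 0) : 0 < 1 - q ^ n := by
  have h2 : |q ^ n| < 1 := by
    rw [abs_pow]; exact pow_lt_one₀ (abs_nonneg q) hq hn
  have := abs_lt.mp h2; linarith

theorem qNat_pos (hq : |q| < 1) (n : ℕ) : 0 < qNat q (n + 1) := by
  have h1 : (1 : ℝ) - q > 0 := by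
    have := abs_lt.mp hq; linarith
  have h2 := one_sub_qpow_pos hq (n + 1) (by omega)
  nlinarith [qNat_mul_one_sub (q := q) (n + 1)]

theorem qNat_ne_zero (hq : |q| < 1) (n : ℕ) : qNat q (n + 1) ≠ 0 := (qNat_pos hq n).ne'

theorem qFact_pos (hq : |q| < 1) (n : ℕ) : 0 < qFact q n := by
  induction n with
  | zero => norm_num [qFact]
  | succ m ih => rw [qFact]; exact mul_pos ih (qNat_pos hq m)

theorem qFact_ne_zero (hq : |q| < 1) (n : ℕ) : qFact q n ≠ 0 := (qFact_pos hq n).ne'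

theorem qFact_succ (n : ℕ) : qFact q (n + 1) = qFact q n * qNat q (n + 1) := rfl

theorem qPoch_succ (a : ℝ) (n : ℕ) : qPoch a q (n + 1) = qPoch a q n * (1 - a * q ^ n) :=
  Finset.prod_range_succ _ _

theorem qPoch_zero (a : ℝ) : qPoch a q 0 = 1 := rfl

theorem qPoch_shift (a : ℝ) (n : ℕ) : qPoch a q (n + 1) = (1 - a) * qPoch (a * q) q n := by
  induction n with
  | zero => simp [qPoch]
  | succ m ih =>
    rw [qPoch_succ, ih, qPoch_succ]
    ring

theorem qPoch_shift2 (a : ℝ) (n : ℕ) :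
    qPoch a q (n + 2) = (1 - a) * (1 - a * q) * qPoch (a * q ^ 2) q n := by
  rw [qPoch_shift, qPoch_shift]
  ring_nf

theorem qFact_zero : qFact q 0 = 1 := rfl

theorem qBinom_of_le {n k : ℕ} (h : k ≤ n) :
    qBinom q n k = qFact q n / (qFact q (n - k) * qFact q k) := if_pos h

theorem qBinom_of_gt {n k : ℕ} (h : n < k) : qBinom q n k = 0 := if_neg (by omega)

theorem qBinom_zero (hq : |q| < 1) (n : ℕ) : qBinom q n 0 = 1 := by
  rw [qBinom_of_le (Nat.zero_le n)]
  simp [qFact_zero]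
  exact (qFact_ne_zero hq n)

theorem qBinom_diag (hq : |q| < 1) (n : ℕ) : qBinom q n n = 1 := by
  rw [qBinom_of_le le_rfl]
  simp [qFact_zero]
  exact (qFact_ne_zero hq n)

theorem qBinom_mul (hq : |q| < 1) (k s : ℕ) :
    qBinom q k (s + 1) * qNat q (s + 1) = qBinom q k s * qNat q (k - s) := by
  rcases Nat.lt_or_ge s k with h | h
  · obtain ⟨d, rfl⟩ : ∃ d, k = s + 1 + d := ⟨k - (s+1), by omega⟩
    rw [qBinom_of_le (by omega), qBinom_of_le (by omega)]
    have e1 : s + 1 + d - (s + 1) = d := by omega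
    have e2 : s + 1 + d - s = d + 1 := by omega
    rw [e1, e2, qFact_succ, qFact_succ]
    have h1 := qFact_ne_zero hq d
    have h2 := qFact_ne_zero hq s
    have h3 := qNat_ne_zero hq s
    have h4 := qNat_ne_zero hq d
    field_simp
  · rcases Nat.eq_or_lt_of_le h with rfl | h'
    · rw [qBinom_of_gt (Nat.lt_succ_self k), Nat.sub_self]
      rw [show qNat q 0 = 0 from rfl]
      ring
    · rw [qBinom_of_gt (by omega), qBinom_of_gt (by omega)]
      ring

theorem qBinom_pascal (hq : |q| < 1) (n k : ℕ) :
    qBinom q (n + 1) (k + 1) = q ^ (k + 1) * qBinom q n (k + 1) + qBinom q n k := by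
  rcases Nat.lt_or_ge k n with h | h
  · obtain ⟨d, rfl⟩ : ∃ d, n = k + 1 + d := ⟨n - (k+1), by omega⟩
    rw [qBinom_of_le (by omega), qBinom_of_le (by omega), qBinom_of_le (by omega)]
    have e1 : k + 1 + d + 1 - (k + 1) = d + 1 := by omega
    have e2 : k + 1 + d - (k + 1) = d := by omega
    have e3 : k + 1 + d - k = d + 1 := by omega
    rw [e1, e2, e3]
    have hadd : qNat q (k + 1 + d + 1) = qNat q (k + 1) + q ^ (k + 1) * qNat q (d + 1) := by
      have := qNat_add (q := q) (k + 1) (d + 1)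
      rw [← this]; congr 1
    rw [show k + 1 + d + 1 = (k + 1 + d) + 1 from rfl, qFact_succ, qFact_succ, qFact_succ, hadd]
    have h1 := qFact_ne_zero hq d
    have h2 := qFact_ne_zero hq k
    have h3 := qFact_ne_zero hq (k + 1 + d)
    have h4 := qNat_ne_zero hq k
    have h5 := qNat_ne_zero hq d
    field_simp
    ring
  · rcases Nat.eq_or_lt_of_le h with rfl | h'
    · rw [qBinom_of_le (le_refl (n + 1)), qBinom_of_gt (Nat.lt_succ_self n),
        qBinom_of_le (le_refl n), Nat.sub_self, Nat.sub_self, qFact_zero, one_mul, one_mul,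
        div_self (qFact_ne_zero hq (n + 1)), div_self (qFact_ne_zero hq n)]
      ring
    · rw [qBinom_of_gt (by omega), qBinom_of_gt (by omega), qBinom_of_gt (by omega)]
      ring

theorem qBinom_absorb (hq : |q| < 1) (k s : ℕ) :
    q ^ (s + 1) * qBinom q k (s + 1) + (1 - q) * qNat q (k - s) * qBinom q k s
      = qBinom q k (s + 1) := by
  have h1 := qBinom_mul hq (q := q) k s
  have h2 := qNat_mul_one_sub (q := q) (s + 1)
  linear_combination (q - 1) * h1 + qBinom q k (s + 1) * h2

/-- The quadratic form ω(x√(1-q)/2, y√(1-q)/2 | r), written without square roots. -/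
def Omg (q x y r : ℝ) : ℝ :=
  (1 - r ^ 2) ^ 2 - r * (1 + r ^ 2) * (1 - q) * (x * y) + r ^ 2 * (1 - q) * (x ^ 2 + y ^ 2)

theorem hermite_rec {y : ℝ} (t : ℕ) :
    y * qHermite q t y = qHermite q (t + 1) y + qNat q t * qHermite q (t - 1) y := by
  cases t with
  | zero => simp [qHermite, qNat]
  | succ n =>
    cases n with
    | zero =>
      show y * y = qHermite q 2 y + qNat q 1 * qHermite q (1 - 1) y
      rw [show qHermite q 2 y = y * qHermite q 1 y - qNat q 1 * qHermite q 0 y from rfl,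
        show qHermite q 1 y = y from rfl, show (1 : ℕ) - 1 = 0 from rfl]
      ring
    | succ m =>
      show y * qHermite q (m + 2) y
        = qHermite q (m + 3) y + qNat q (m + 2) * qHermite q (m + 2 - 1) y
      rw [show qHermite q (m + 3) y = y * qHermite q (m + 2) y
        - qNat q (m + 2) * qHermite q (m + 1) y from rfl, show m + 2 - 1 = m + 1 from rfl]
      ring

theorem ascP_rec {x y : ℝ} (r : ℝ) (m : ℕ) :
    x * ascP q y r (m + 1) x = ascP q y r (m + 2) x + r * y * q ^ (m + 1) * ascP q y r (m + 1) x
      + qNat q (m + 1) * (1 - r ^ 2 * q ^ m) * ascP q y r m x := by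
  rw [show ascP q y r (m + 2) x = (x - r * y * q ^ (m + 1)) * ascP q y r (m + 1) x -
      qNat q (m + 1) * (1 - r ^ 2 * q ^ m) * ascP q y r m x from rfl]
  ring

/-- the master identity (★) -/
theorem star {x y : ℝ} (r : ℝ) (m : ℕ) :
    Omg q x y r * ascP q y (r * q) m x =
      (1 - r ^ 2 * q ^ m) * (1 - r ^ 2 * q ^ (m + 1)) * ascP q y r m x
      - (1 - q) * r * (1 - r ^ 2 * q ^ (m + 1)) * y * ascP q y r (m + 1) x
      + (1 - q) * r ^ 2 * ascP q y r (m + 2) x := by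
  have key : ∀ n : ℕ,
      (Omg q x y r * ascP q y (r * q) n x =
        (1 - r ^ 2 * q ^ n) * (1 - r ^ 2 * q ^ (n + 1)) * ascP q y r n x
        - (1 - q) * r * (1 - r ^ 2 * q ^ (n + 1)) * y * ascP q y r (n + 1) x
        + (1 - q) * r ^ 2 * ascP q y r (n + 2) x) ∧
      (Omg q x y r * ascP q y (r * q) (n + 1) x =
        (1 - r ^ 2 * q ^ (n + 1)) * (1 - r ^ 2 * q ^ (n + 2)) * ascP q y r (n + 1) x
        - (1 - q) * r * (1 - r ^ 2 * q ^ (n + 2)) * y * ascP q y r (n + 2) x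
        + (1 - q) * r ^ 2 * ascP q y r (n + 3) x) := by
    intro n
    induction n with
    | zero =>
      have h0 : ascP q y r 0 x = 1 := rfl
      have h1 : ascP q y r 1 x = x - r * y := rfl
      have h2 : ascP q y r 2 x = (x - r * y * q ^ 1) * ascP q y r 1 x
          - qNat q 1 * (1 - r ^ 2 * q ^ 0) * ascP q y r 0 x := rfl
      have h3 : ascP q y r 3 x = (x - r * y * q ^ 2) * ascP q y r 2 x
          - qNat q 2 * (1 - r ^ 2 * q ^ 1) * ascP q y r 1 x := rfl
      have g0 : ascP q y (r * q) 0 x = 1 := rfl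
      have g1 : ascP q y (r * q) 1 x = x - (r * q) * y := rfl
      have hq2 : qNat q 2 = 1 + q := by rw [qNat_succ, qNat_one, pow_one]
      constructor
      · norm_num
        rw [g0, h2, h1, h0, qNat_one, Omg]
        norm_num
        ring
      · norm_num
        rw [g1, h3, h2, h1, h0, qNat_one, hq2, Omg]
        norm_num
        ring
    | succ k ih =>
      obtain ⟨ih0, ih1⟩ := ih
      refine ⟨ih1, ?_⟩
      rw [show ascP q y (r * q) (k + 2) x = (x - (r * q) * y * q ^ (k + 1)) *
          ascP q y (r * q) (k + 1) x -
          qNat q (k + 1) * (1 - (r * q) ^ 2 * q ^ k) * ascP q y (r * q) k x from rfl]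
      have hx1 := ascP_rec (q := q) (x := x) (y := y) r k
      have hx2 := ascP_rec (q := q) (x := x) (y := y) r (k + 1)
      have hx3 := ascP_rec (q := q) (x := x) (y := y) r (k + 2)
      rw [qNat_succ] at hx2
      rw [qNat_succ, qNat_succ] at hx3
      linear_combination (x - r * q * y * q ^ (k + 1)) * ih1
        - (qNat q (k + 1) * (1 - (r * q) ^ 2 * q ^ k)) * ih0
        + ((1 - r ^ 2 * q ^ (k + 1)) * (1 - r ^ 2 * q ^ (k + 2))) * hx1
        + (-(1 - q) * r * y * (1 - r ^ 2 * q ^ (k + 2))) * hx2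
        + ((1 - q) * r ^ 2) * hx3
  exact (key m).1

theorem tri (s : ℕ) : (s + 1) * (s + 1 - 1) / 2 = s * (s - 1) / 2 + s := by
  rw [Nat.add_sub_cancel]
  cases s with
  | zero => rfl
  | succ u =>
    rw [Nat.succ_sub_one, show (u + 1 + 1) * (u + 1) = (u + 1) * u + (u + 1) * 2 from by ring,
      Nat.add_mul_div_right _ _ (by norm_num : (0:ℕ) < 2)]

theorem one_sub_rsq_pow_ne {r : ℝ} (hq : |q| < 1) (hr : |r| < 1) (j : ℕ) :
    (1 - r ^ 2 * q ^ j) ≠ 0 := by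
  have h : |r ^ 2 * q ^ j| < 1 := by
    rw [abs_mul, abs_pow, abs_pow]
    have h1 : |q| ^ j ≤ 1 := pow_le_one₀ (abs_nonneg q) hq.le
    have h2 : |r| ^ 2 < 1 := pow_lt_one₀ (abs_nonneg r) hr (by norm_num)
    nlinarith [pow_nonneg (abs_nonneg r) 2, pow_nonneg (abs_nonneg q) j]
  have := abs_lt.mp h
  intro hcon
  linarith

theorem div_split (Og Np A B C D0 G0 u0 u1 φ : ℝ) (hφ : φ ≠ 0) (hu0 : u0 ≠ 0) (hu1 : u1 ≠ 0)
    (h : φ * (Og * Np) = A * (u0 * u1) + B * u1 + C * u1 + D0) :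
    Og * (Np / (G0 * u0 * u1 / φ)) =
      A / G0 + B / (G0 * u0) + C / (G0 * u0) + D0 / (G0 * u0 * u1) := by
  rcases eq_or_ne G0 0 with rfl | hG0
  · simp
  · field_simp
    linear_combination h

theorem key {x y : ℝ} (hq : |q| < 1) {r : ℝ} (hr : |r| < 1) (k : ℕ) :
    Omg q x y r * Qpoly q (r * q) k k x y =
      (1 - r ^ 2) * (1 - r ^ 2 * q) *
        (Qpoly q r k k x y - (1 - q) * r * Qpoly q r (k + 1) (k + 1) x y) := by
  have hu := one_sub_rsq_pow_ne (q := q) (r := r) hq hr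
  have hφ : (1 - r ^ 2) * (1 - r ^ 2 * q) ≠ 0 := by
    have h0 := hu 0; have h1 := hu 1
    rw [pow_zero, mul_one] at h0
    rw [pow_one] at h1
    exact mul_ne_zero h0 h1
  -- per-term split of the left-hand side
  have hterm : ∀ s ∈ range (k + 1),
      Omg q x y r * ((-1 : ℝ) ^ s * q ^ (s * (s - 1) / 2) * qBinom q k s * (r * q) ^ s *
          qHermite q (k - s) y * ascP q y (r * q) (k + s) x / qPoch ((r * q) ^ 2) q (k + s)) =
        (1 - r ^ 2) * (1 - r ^ 2 * q) * ((-1 : ℝ) ^ s * q ^ (s * (s - 1) / 2) * qBinom q k s *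
            (r * q) ^ s * qHermite q (k - s) y * ascP q y r (k + s) x) / qPoch (r ^ 2) q (k + s)
        - (1 - q) * r * ((1 - r ^ 2) * (1 - r ^ 2 * q) * ((-1 : ℝ) ^ s * q ^ (s * (s - 1) / 2) *
            qBinom q k s * (r * q) ^ s * qHermite q (k + 1 - s) y *
            ascP q y r (k + 1 + s) x) / qPoch (r ^ 2) q (k + 1 + s))
        - (1 - q) * r * ((1 - r ^ 2) * (1 - r ^ 2 * q) * ((-1 : ℝ) ^ s * q ^ (s * (s - 1) / 2) *
            qBinom q k s * (r * q) ^ s * qNat q (k - s) * qHermite q (k - (s + 1)) y *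
            ascP q y r (k + (s + 1)) x) / qPoch (r ^ 2) q (k + (s + 1)))
        + (1 - q) * r ^ 2 * ((1 - r ^ 2) * (1 - r ^ 2 * q) * ((-1 : ℝ) ^ s * q ^ (s * (s - 1) / 2) *
            qBinom q k s * (r * q) ^ s * qHermite q (k + 1 - (s + 1)) y *
            ascP q y r (k + 1 + (s + 1)) x) / qPoch (r ^ 2) q (k + 1 + (s + 1))) := by
    intro s hs
    have hsk : s ≤ k := by
      have := Finset.mem_range.mp hs; omega
    have hPch : qPoch ((r * q) ^ 2) q (k + s) =
        qPoch (r ^ 2) q (k + s) * (1 - r ^ 2 * q ^ (k + s)) * (1 - r ^ 2 * q ^ (k + s + 1)) /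
          ((1 - r ^ 2) * (1 - r ^ 2 * q)) := by
      rw [eq_div_iff hφ]
      have h1 := qPoch_shift2 (q := q) (r ^ 2) (k + s)
      have h2 : qPoch (r ^ 2) q (k + s + 2) =
          qPoch (r ^ 2) q (k + s) * (1 - r ^ 2 * q ^ (k + s)) * (1 - r ^ 2 * q ^ (k + s + 1)) := by
        rw [show k + s + 2 = (k + s + 1) + 1 from by omega, qPoch_succ, qPoch_succ]
      have h3 : (r * q) ^ 2 = r ^ 2 * q ^ 2 := by ring
      rw [h3]
      linear_combination h2 - h1
    rw [hPch]
    have harg : (1 - r ^ 2) * (1 - r ^ 2 * q) * (Omg q x y r * ((-1 : ℝ) ^ s *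
          q ^ (s * (s - 1) / 2) * qBinom q k s * (r * q) ^ s *
          qHermite q (k - s) y * ascP q y (r * q) (k + s) x)) =
        ((1 - r ^ 2) * (1 - r ^ 2 * q) * ((-1 : ℝ) ^ s * q ^ (s * (s - 1) / 2) * qBinom q k s *
            (r * q) ^ s * qHermite q (k - s) y * ascP q y r (k + s) x)) *
          ((1 - r ^ 2 * q ^ (k + s)) * (1 - r ^ 2 * q ^ (k + s + 1)))
        + (-((1 - q) * r * ((1 - r ^ 2) * (1 - r ^ 2 * q) * ((-1 : ℝ) ^ s *
            q ^ (s * (s - 1) / 2) * qBinom q k s * (r * q) ^ s * qHermite q (k + 1 - s) y *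
            ascP q y r (k + 1 + s) x)))) * (1 - r ^ 2 * q ^ (k + s + 1))
        + (-((1 - q) * r * ((1 - r ^ 2) * (1 - r ^ 2 * q) * ((-1 : ℝ) ^ s *
            q ^ (s * (s - 1) / 2) * qBinom q k s * (r * q) ^ s * qNat q (k - s) *
            qHermite q (k - (s + 1)) y * ascP q y r (k + (s + 1)) x)))) *
          (1 - r ^ 2 * q ^ (k + s + 1))
        + ((1 - q) * r ^ 2 * ((1 - r ^ 2) * (1 - r ^ 2 * q) * ((-1 : ℝ) ^ s *
            q ^ (s * (s - 1) / 2) * qBinom q k s * (r * q) ^ s *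
            qHermite q (k + 1 - (s + 1)) y * ascP q y r (k + 1 + (s + 1)) x))) := by
      rw [show k + 1 + s = k + s + 1 from by omega, show k + (s + 1) = k + s + 1 from by omega,
        show k + 1 + (s + 1) = k + s + 2 from by omega,
        show k + 1 - s = (k - s) + 1 from by omega,
        show k - (s + 1) = (k - s) - 1 from by omega,
        show k + 1 - (s + 1) = k - s from by omega]
      have hst := star (q := q) (x := x) (y := y) r (k + s)
      have hhe := hermite_rec (q := q) (y := y) (k - s)
      linear_combination ((1 - r ^ 2) * (1 - r ^ 2 * q) * ((-1 : ℝ) ^ s *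
          q ^ (s * (s - 1) / 2) * qBinom q k s * (r * q) ^ s * qHermite q (k - s) y)) * hst
        - ((1 - q) * r * (1 - r ^ 2 * q ^ (k + s + 1)) * (1 - r ^ 2) * (1 - r ^ 2 * q) *
            ((-1 : ℝ) ^ s * q ^ (s * (s - 1) / 2) * qBinom q k s * (r * q) ^ s *
            ascP q y r (k + s + 1) x)) * hhe
    have hds := div_split (Omg q x y r)
      ((-1 : ℝ) ^ s * q ^ (s * (s - 1) / 2) * qBinom q k s * (r * q) ^ s *
        qHermite q (k - s) y * ascP q y (r * q) (k + s) x)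
      ((1 - r ^ 2) * (1 - r ^ 2 * q) * ((-1 : ℝ) ^ s * q ^ (s * (s - 1) / 2) * qBinom q k s *
        (r * q) ^ s * qHermite q (k - s) y * ascP q y r (k + s) x))
      (-((1 - q) * r * ((1 - r ^ 2) * (1 - r ^ 2 * q) * ((-1 : ℝ) ^ s * q ^ (s * (s - 1) / 2) *
        qBinom q k s * (r * q) ^ s * qHermite q (k + 1 - s) y * ascP q y r (k + 1 + s) x))))
      (-((1 - q) * r * ((1 - r ^ 2) * (1 - r ^ 2 * q) * ((-1 : ℝ) ^ s * q ^ (s * (s - 1) / 2) *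
        qBinom q k s * (r * q) ^ s * qNat q (k - s) * qHermite q (k - (s + 1)) y *
        ascP q y r (k + (s + 1)) x))))
      ((1 - q) * r ^ 2 * ((1 - r ^ 2) * (1 - r ^ 2 * q) * ((-1 : ℝ) ^ s * q ^ (s * (s - 1) / 2) *
        qBinom q k s * (r * q) ^ s * qHermite q (k + 1 - (s + 1)) y *
        ascP q y r (k + 1 + (s + 1)) x)))
      (qPoch (r ^ 2) q (k + s)) (1 - r ^ 2 * q ^ (k + s)) (1 - r ^ 2 * q ^ (k + s + 1))
      ((1 - r ^ 2) * (1 - r ^ 2 * q)) hφ (hu (k + s)) (hu (k + s + 1)) harg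
    rw [hds]
    have g1 : qPoch (r ^ 2) q (k + 1 + s) =
        qPoch (r ^ 2) q (k + s) * (1 - r ^ 2 * q ^ (k + s)) := by
      rw [show k + 1 + s = (k + s) + 1 from by omega, qPoch_succ]
    have g1' : qPoch (r ^ 2) q (k + (s + 1)) =
        qPoch (r ^ 2) q (k + s) * (1 - r ^ 2 * q ^ (k + s)) := by
      rw [show k + (s + 1) = (k + s) + 1 from by omega, qPoch_succ]
    have g2 : qPoch (r ^ 2) q (k + 1 + (s + 1)) =
        qPoch (r ^ 2) q (k + s) * (1 - r ^ 2 * q ^ (k + s)) * (1 - r ^ 2 * q ^ (k + s + 1)) := by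
      rw [show k + 1 + (s + 1) = (k + s + 1) + 1 from by omega, qPoch_succ,
        show k + s + 1 = (k + s) + 1 from rfl, qPoch_succ]
    rw [g1, g1', g2]
    ring

  -- split of LHS into four sums
  have hsplit : Omg q x y r * Qpoly q (r * q) k k x y =
      (∑ s ∈ range (k + 1), (1 - r ^ 2) * (1 - r ^ 2 * q) * ((-1 : ℝ) ^ s * q ^ (s * (s - 1) / 2) * qBinom q k s * (r * q) ^ s * qHermite q (k - s) y * ascP q y r (k + s) x) / qPoch (r ^ 2) q (k + s))
      - (1 - q) * r * (∑ s ∈ range (k + 1), (1 - r ^ 2) * (1 - r ^ 2 * q) * ((-1 : ℝ) ^ s * q ^ (s * (s - 1) / 2) * qBinom q k s * (r * q) ^ s * qHermite q (k + 1 - s) y * ascP q y r (k + 1 + s) x) / qPoch (r ^ 2) q (k + 1 + s))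
      - (1 - q) * r * (∑ s ∈ range (k + 1), (1 - r ^ 2) * (1 - r ^ 2 * q) * ((-1 : ℝ) ^ s * q ^ (s * (s - 1) / 2) * qBinom q k s * (r * q) ^ s * qNat q (k - s) * qHermite q (k - (s + 1)) y * ascP q y r (k + (s + 1)) x) / qPoch (r ^ 2) q (k + (s + 1)))
      + (1 - q) * r ^ 2 * (∑ s ∈ range (k + 1), (1 - r ^ 2) * (1 - r ^ 2 * q) * ((-1 : ℝ) ^ s * q ^ (s * (s - 1) / 2) * qBinom q k s * (r * q) ^ s * qHermite q (k + 1 - (s + 1)) y * ascP q y r (k + 1 + (s + 1)) x) / qPoch (r ^ 2) q (k + 1 + (s + 1))) := by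
    simp only [Qpoly]
    rw [Finset.mul_sum, Finset.sum_congr rfl hterm, Finset.sum_add_distrib,
      Finset.sum_sub_distrib, Finset.sum_sub_distrib, ← Finset.mul_sum, ← Finset.mul_sum,
      ← Finset.mul_sum]
  -- the diagonal 2k part
  have h2 : (∑ s ∈ range (k + 1), (1 - r ^ 2) * (1 - r ^ 2 * q) * ((-1 : ℝ) ^ (s) * q ^ ((s) * ((s) - 1) / 2) * qBinom q k (s) * (r * q) ^ (s) * qHermite q (k - (s)) y * ascP q y r (k + (s)) x) / qPoch (r ^ 2) q (k + (s)))
      - (1 - q) * r * (∑ s ∈ range (k + 1), (1 - r ^ 2) * (1 - r ^ 2 * q) * ((-1 : ℝ) ^ (s) * q ^ ((s) * ((s) - 1) / 2) * qBinom q k (s) * (r * q) ^ (s) * qNat q (k - (s)) * qHermite q (k - ((s) + 1)) y * ascP q y r (k + ((s) + 1)) x) / qPoch (r ^ 2) q (k + ((s) + 1)))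
      = (1 - r ^ 2) * (1 - r ^ 2 * q) * Qpoly q r k k x y := by
    have hsum : (∑ s ∈ range k, ((1 - r ^ 2) * (1 - r ^ 2 * q) * ((-1 : ℝ) ^ (s + 1) * q ^ ((s + 1) * ((s + 1) - 1) / 2) * qBinom q k (s + 1) * (r * q) ^ (s + 1) * qHermite q (k - (s + 1)) y * ascP q y r (k + (s + 1)) x) / qPoch (r ^ 2) q (k + (s + 1))
          - (1 - q) * r * ((1 - r ^ 2) * (1 - r ^ 2 * q) * ((-1 : ℝ) ^ (s) * q ^ ((s) * ((s) - 1) / 2) * qBinom q k (s) * (r * q) ^ (s) * qNat q (k - (s)) * qHermite q (k - ((s) + 1)) y * ascP q y r (k + ((s) + 1)) x) / qPoch (r ^ 2) q (k + ((s) + 1))))) =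
        ∑ s ∈ range k, (1 - r ^ 2) * (1 - r ^ 2 * q) * ((-1 : ℝ) ^ (s + 1) * q ^ ((s + 1) * ((s + 1) - 1) / 2) * qBinom q k (s + 1) * r ^ (s + 1) * qHermite q (k - (s + 1)) y * ascP q y r (k + (s + 1)) x / qPoch (r ^ 2) q (k + (s + 1))) := by
      refine Finset.sum_congr rfl fun s hs => ?_
      rw [show (s + 1) * (s + 1 - 1) / 2 = s * (s - 1) / 2 + s from tri s]
      linear_combination ((-1 : ℝ) ^ (s + 1) * q ^ (s * (s - 1) / 2) * q ^ s * r ^ (s + 1) *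
        ((1 - r ^ 2) * (1 - r ^ 2 * q)) * qHermite q (k - (s + 1)) y *
        ascP q y r (k + (s + 1)) x / qPoch (r ^ 2) q (k + (s + 1))) * qBinom_absorb hq k s
    calc (∑ s ∈ range (k + 1), (1 - r ^ 2) * (1 - r ^ 2 * q) * ((-1 : ℝ) ^ (s) * q ^ ((s) * ((s) - 1) / 2) * qBinom q k (s) * (r * q) ^ (s) * qHermite q (k - (s)) y * ascP q y r (k + (s)) x) / qPoch (r ^ 2) q (k + (s)))
        - (1 - q) * r * (∑ s ∈ range (k + 1), (1 - r ^ 2) * (1 - r ^ 2 * q) * ((-1 : ℝ) ^ (s) * q ^ ((s) * ((s) - 1) / 2) * qBinom q k (s) * (r * q) ^ (s) * qNat q (k - (s)) * qHermite q (k - ((s) + 1)) y * ascP q y r (k + ((s) + 1)) x) / qPoch (r ^ 2) q (k + ((s) + 1)))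
        = ((∑ s ∈ range k, (1 - r ^ 2) * (1 - r ^ 2 * q) * ((-1 : ℝ) ^ (s + 1) * q ^ ((s + 1) * ((s + 1) - 1) / 2) * qBinom q k (s + 1) * (r * q) ^ (s + 1) * qHermite q (k - (s + 1)) y * ascP q y r (k + (s + 1)) x) / qPoch (r ^ 2) q (k + (s + 1))) + ((1 - r ^ 2) * (1 - r ^ 2 * q) * ((-1 : ℝ) ^ (0) * q ^ ((0) * ((0) - 1) / 2) * qBinom q k (0) * (r * q) ^ (0) * qHermite q (k - (0)) y * ascP q y r (k + (0)) x) / qPoch (r ^ 2) q (k + (0))))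
          - (1 - q) * r * ((∑ s ∈ range k, (1 - r ^ 2) * (1 - r ^ 2 * q) * ((-1 : ℝ) ^ (s) * q ^ ((s) * ((s) - 1) / 2) * qBinom q k (s) * (r * q) ^ (s) * qNat q (k - (s)) * qHermite q (k - ((s) + 1)) y * ascP q y r (k + ((s) + 1)) x) / qPoch (r ^ 2) q (k + ((s) + 1))) + ((1 - r ^ 2) * (1 - r ^ 2 * q) * ((-1 : ℝ) ^ (k) * q ^ ((k) * ((k) - 1) / 2) * qBinom q k (k) * (r * q) ^ (k) * qNat q (k - (k)) * qHermite q (k - ((k) + 1)) y * ascP q y r (k + ((k) + 1)) x) / qPoch (r ^ 2) q (k + ((k) + 1)))) := by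
          rw [Finset.sum_range_succ' (fun s => (1 - r ^ 2) * (1 - r ^ 2 * q) * ((-1 : ℝ) ^ (s) * q ^ ((s) * ((s) - 1) / 2) * qBinom q k (s) * (r * q) ^ (s) * qHermite q (k - (s)) y * ascP q y r (k + (s)) x) / qPoch (r ^ 2) q (k + (s))) k,
            Finset.sum_range_succ (fun s => (1 - r ^ 2) * (1 - r ^ 2 * q) * ((-1 : ℝ) ^ (s) * q ^ ((s) * ((s) - 1) / 2) * qBinom q k (s) * (r * q) ^ (s) * qNat q (k - (s)) * qHermite q (k - ((s) + 1)) y * ascP q y r (k + ((s) + 1)) x) / qPoch (r ^ 2) q (k + ((s) + 1))) k]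
      _ = (∑ s ∈ range k, ((1 - r ^ 2) * (1 - r ^ 2 * q) * ((-1 : ℝ) ^ (s + 1) * q ^ ((s + 1) * ((s + 1) - 1) / 2) * qBinom q k (s + 1) * (r * q) ^ (s + 1) * qHermite q (k - (s + 1)) y * ascP q y r (k + (s + 1)) x) / qPoch (r ^ 2) q (k + (s + 1)) - (1 - q) * r * ((1 - r ^ 2) * (1 - r ^ 2 * q) * ((-1 : ℝ) ^ (s) * q ^ ((s) * ((s) - 1) / 2) * qBinom q k (s) * (r * q) ^ (s) * qNat q (k - (s)) * qHermite q (k - ((s) + 1)) y * ascP q y r (k + ((s) + 1)) x) / qPoch (r ^ 2) q (k + ((s) + 1)))))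
          + ((1 - r ^ 2) * (1 - r ^ 2 * q) * ((-1 : ℝ) ^ (0) * q ^ ((0) * ((0) - 1) / 2) * qBinom q k (0) * (r * q) ^ (0) * qHermite q (k - (0)) y * ascP q y r (k + (0)) x) / qPoch (r ^ 2) q (k + (0))) - (1 - q) * r * ((1 - r ^ 2) * (1 - r ^ 2 * q) * ((-1 : ℝ) ^ (k) * q ^ ((k) * ((k) - 1) / 2) * qBinom q k (k) * (r * q) ^ (k) * qNat q (k - (k)) * qHermite q (k - ((k) + 1)) y * ascP q y r (k + ((k) + 1)) x) / qPoch (r ^ 2) q (k + ((k) + 1))) := by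
          rw [Finset.sum_sub_distrib, ← Finset.mul_sum]; ring
      _ = (∑ s ∈ range k, (1 - r ^ 2) * (1 - r ^ 2 * q) * ((-1 : ℝ) ^ (s + 1) * q ^ ((s + 1) * ((s + 1) - 1) / 2) * qBinom q k (s + 1) * r ^ (s + 1) * qHermite q (k - (s + 1)) y * ascP q y r (k + (s + 1)) x / qPoch (r ^ 2) q (k + (s + 1))))
          + ((1 - r ^ 2) * (1 - r ^ 2 * q) * ((-1 : ℝ) ^ (0) * q ^ ((0) * ((0) - 1) / 2) * qBinom q k (0) * (r * q) ^ (0) * qHermite q (k - (0)) y * ascP q y r (k + (0)) x) / qPoch (r ^ 2) q (k + (0))) - (1 - q) * r * ((1 - r ^ 2) * (1 - r ^ 2 * q) * ((-1 : ℝ) ^ (k) * q ^ ((k) * ((k) - 1) / 2) * qBinom q k (k) * (r * q) ^ (k) * qNat q (k - (k)) * qHermite q (k - ((k) + 1)) y * ascP q y r (k + ((k) + 1)) x) / qPoch (r ^ 2) q (k + ((k) + 1))) := by rw [hsum]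
      _ = (∑ s ∈ range k, (1 - r ^ 2) * (1 - r ^ 2 * q) * ((-1 : ℝ) ^ (s + 1) * q ^ ((s + 1) * ((s + 1) - 1) / 2) * qBinom q k (s + 1) * r ^ (s + 1) * qHermite q (k - (s + 1)) y * ascP q y r (k + (s + 1)) x / qPoch (r ^ 2) q (k + (s + 1)))) + (1 - r ^ 2) * (1 - r ^ 2 * q) * ((-1 : ℝ) ^ (0) * q ^ ((0) * ((0) - 1) / 2) * qBinom q k (0) * r ^ (0) * qHermite q (k - (0)) y * ascP q y r (k + (0)) x / qPoch (r ^ 2) q (k + (0))) := by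
          rw [Nat.sub_self, qNat_zero, qBinom_zero hq k]; ring
      _ = ∑ s ∈ range (k + 1), (1 - r ^ 2) * (1 - r ^ 2 * q) * ((-1 : ℝ) ^ (s) * q ^ ((s) * ((s) - 1) / 2) * qBinom q k (s) * r ^ (s) * qHermite q (k - (s)) y * ascP q y r (k + (s)) x / qPoch (r ^ 2) q (k + (s))) :=
          (Finset.sum_range_succ' (fun s => (1 - r ^ 2) * (1 - r ^ 2 * q) * ((-1 : ℝ) ^ (s) * q ^ ((s) * ((s) - 1) / 2) * qBinom q k (s) * r ^ (s) * qHermite q (k - (s)) y * ascP q y r (k + (s)) x / qPoch (r ^ 2) q (k + (s)))) k).symm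
      _ = (1 - r ^ 2) * (1 - r ^ 2 * q) * Qpoly q r k k x y := by
          rw [Qpoly, Finset.mul_sum]
  -- the diagonal 2k+2 part
  have h3 : (∑ s ∈ range (k + 1), (1 - r ^ 2) * (1 - r ^ 2 * q) * ((-1 : ℝ) ^ (s) * q ^ ((s) * ((s) - 1) / 2) * qBinom q k (s) * (r * q) ^ (s) * qHermite q (k + 1 - (s)) y * ascP q y r (k + 1 + (s)) x) / qPoch (r ^ 2) q (k + 1 + (s)))
      - r * (∑ s ∈ range (k + 1), (1 - r ^ 2) * (1 - r ^ 2 * q) * ((-1 : ℝ) ^ (s) * q ^ ((s) * ((s) - 1) / 2) * qBinom q k (s) * (r * q) ^ (s) * qHermite q (k + 1 - ((s) + 1)) y * ascP q y r (k + 1 + ((s) + 1)) x) / qPoch (r ^ 2) q (k + 1 + ((s) + 1)))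
      = (1 - r ^ 2) * (1 - r ^ 2 * q) * Qpoly q r (k + 1) (k + 1) x y := by
    have htop : ((1 - r ^ 2) * (1 - r ^ 2 * q) * ((-1 : ℝ) ^ (k + 1) * q ^ ((k + 1) * ((k + 1) - 1) / 2) * qBinom q k (k + 1) * (r * q) ^ (k + 1) * qHermite q (k + 1 - (k + 1)) y * ascP q y r (k + 1 + (k + 1)) x) / qPoch (r ^ 2) q (k + 1 + (k + 1))) = 0 := by
      rw [qBinom_of_gt (Nat.lt_succ_self k)]; ring
    have hsum : (∑ s ∈ range (k + 1), ((1 - r ^ 2) * (1 - r ^ 2 * q) * ((-1 : ℝ) ^ (s + 1) * q ^ ((s + 1) * ((s + 1) - 1) / 2) * qBinom q k (s + 1) * (r * q) ^ (s + 1) * qHermite q (k + 1 - (s + 1)) y * ascP q y r (k + 1 + (s + 1)) x) / qPoch (r ^ 2) q (k + 1 + (s + 1)) - r * ((1 - r ^ 2) * (1 - r ^ 2 * q) * ((-1 : ℝ) ^ (s) * q ^ ((s) * ((s) - 1) / 2) * qBinom q k (s) * (r * q) ^ (s) * qHermite q (k + 1 - ((s) + 1)) y * ascP q y r (k + 1 +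 ((s) + 1)) x) / qPoch (r ^ 2) q (k + 1 + ((s) + 1))))) =
        ∑ s ∈ range (k + 1), (1 - r ^ 2) * (1 - r ^ 2 * q) * ((-1 : ℝ) ^ (s + 1) * q ^ ((s + 1) * ((s + 1) - 1) / 2) * qBinom q (k + 1) (s + 1) * r ^ (s + 1) * qHermite q (k + 1 - (s + 1)) y * ascP q y r (k + 1 + (s + 1)) x / qPoch (r ^ 2) q (k + 1 + (s + 1))) := by
      refine Finset.sum_congr rfl fun s hs => ?_
      rw [show (s + 1) * (s + 1 - 1) / 2 = s * (s - 1) / 2 + s from tri s]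
      linear_combination (-((-1 : ℝ) ^ (s + 1) * q ^ (s * (s - 1) / 2) * q ^ s * r ^ (s + 1) *
        ((1 - r ^ 2) * (1 - r ^ 2 * q)) * qHermite q (k + 1 - (s + 1)) y *
        ascP q y r (k + 1 + (s + 1)) x / qPoch (r ^ 2) q (k + 1 + (s + 1)))) *
        qBinom_pascal hq k s
    calc (∑ s ∈ range (k + 1), (1 - r ^ 2) * (1 - r ^ 2 * q) * ((-1 : ℝ) ^ (s) * q ^ ((s) * ((s) - 1) / 2) * qBinom q k (s) * (r * q) ^ (s) * qHermite q (k + 1 - (s)) y * ascP q y r (k + 1 + (s)) x) / qPoch (r ^ 2) q (k + 1 + (s)))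
        - r * (∑ s ∈ range (k + 1), (1 - r ^ 2) * (1 - r ^ 2 * q) * ((-1 : ℝ) ^ (s) * q ^ ((s) * ((s) - 1) / 2) * qBinom q k (s) * (r * q) ^ (s) * qHermite q (k + 1 - ((s) + 1)) y * ascP q y r (k + 1 + ((s) + 1)) x) / qPoch (r ^ 2) q (k + 1 + ((s) + 1)))
        = ((∑ s ∈ range k, (1 - r ^ 2) * (1 - r ^ 2 * q) * ((-1 : ℝ) ^ (s + 1) * q ^ ((s + 1) * ((s + 1) - 1) / 2) * qBinom q k (s + 1) * (r * q) ^ (s + 1) * qHermite q (k + 1 - (s + 1)) y * ascP q y r (k + 1 + (s + 1)) x) / qPoch (r ^ 2) q (k + 1 + (s + 1))) + ((1 - r ^ 2) * (1 - r ^ 2 * q) * ((-1 : ℝ) ^ (0) * q ^ ((0) * ((0) - 1) / 2) * qBinom q k (0) * (r * q) ^ (0) * qHermite q (k + 1 - (0)) y * ascP q y r (k + 1 + (0)) x) / qPoch (r ^ 2) q (k + 1 + (0))))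
          - r * (∑ s ∈ range (k + 1), (1 - r ^ 2) * (1 - r ^ 2 * q) * ((-1 : ℝ) ^ (s) * q ^ ((s) * ((s) - 1) / 2) * qBinom q k (s) * (r * q) ^ (s) * qHermite q (k + 1 - ((s) + 1)) y * ascP q y r (k + 1 + ((s) + 1)) x) / qPoch (r ^ 2) q (k + 1 + ((s) + 1))) := by
          rw [Finset.sum_range_succ' (fun s => (1 - r ^ 2) * (1 - r ^ 2 * q) * ((-1 : ℝ) ^ (s) * q ^ ((s) * ((s) - 1) / 2) * qBinom q k (s) * (r * q) ^ (s) * qHermite q (k + 1 - (s)) y * ascP q y r (k + 1 + (s)) x) / qPoch (r ^ 2) q (k + 1 + (s))) k]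
      _ = ((∑ s ∈ range (k + 1), (1 - r ^ 2) * (1 - r ^ 2 * q) * ((-1 : ℝ) ^ (s + 1) * q ^ ((s + 1) * ((s + 1) - 1) / 2) * qBinom q k (s + 1) * (r * q) ^ (s + 1) * qHermite q (k + 1 - (s + 1)) y * ascP q y r (k + 1 + (s + 1)) x) / qPoch (r ^ 2) q (k + 1 + (s + 1))) - ((1 - r ^ 2) * (1 - r ^ 2 * q) * ((-1 : ℝ) ^ (k + 1) * q ^ ((k + 1) * ((k + 1) - 1) / 2) * qBinom q k (k + 1) * (r * q) ^ (k + 1) * qHermite q (k + 1 - (k + 1)) y * ascP q y r (k + 1 + (k + 1)) x) / qPoch (r ^ 2) q (k + 1 + (k + 1))) + ((1 - r ^ 2) * (1 - r ^ 2 * q) * ((-1 : ℝ) ^ (0) * q ^ ((0) * ((0) - 1) / 2) * qBinom q k (0) * (r * q) ^ (0) * qHermite q (k + 1 - (0)) y * ascP q y r (k + 1 + (0)) x) / qPoch (r ^ 2) q (k + 1 + (0))))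
          - r * (∑ s ∈ range (k + 1), (1 - r ^ 2) * (1 - r ^ 2 * q) * ((-1 : ℝ) ^ (s) * q ^ ((s) * ((s) - 1) / 2) * qBinom q k (s) * (r * q) ^ (s) * qHermite q (k + 1 - ((s) + 1)) y * ascP q y r (k + 1 + ((s) + 1)) x) / qPoch (r ^ 2) q (k + 1 + ((s) + 1))) := by
          rw [Finset.sum_range_succ (fun s => (1 - r ^ 2) * (1 - r ^ 2 * q) * ((-1 : ℝ) ^ (s + 1) * q ^ ((s + 1) * ((s + 1) - 1) / 2) * qBinom q k (s + 1) * (r * q) ^ (s + 1) * qHermite q (k + 1 - (s + 1)) y * ascP q y r (k + 1 + (s + 1)) x) / qPoch (r ^ 2) q (k + 1 + (s + 1))) k]; ring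
      _ = (∑ s ∈ range (k + 1), ((1 - r ^ 2) * (1 - r ^ 2 * q) * ((-1 : ℝ) ^ (s + 1) * q ^ ((s + 1) * ((s + 1) - 1) / 2) * qBinom q k (s + 1) * (r * q) ^ (s + 1) * qHermite q (k + 1 - (s + 1)) y * ascP q y r (k + 1 + (s + 1)) x) / qPoch (r ^ 2) q (k + 1 + (s + 1)) - r * ((1 - r ^ 2) * (1 - r ^ 2 * q) * ((-1 : ℝ) ^ (s) * q ^ ((s) * ((s) - 1) / 2) * qBinom q k (s) * (r * q) ^ (s) * qHermite q (k + 1 - ((s) + 1)) y * ascP q y r (k + 1 + ((s) + 1)) x) / qPoch (r ^ 2) q (k + 1 + ((s) + 1))))) + ((1 - r ^ 2) * (1 - r ^ 2 * q) * ((-1 : ℝ) ^ (0) * q ^ ((0) * ((0) - 1) / 2) * qBinom q k (0) * (r * q) ^ (0) * qHermite q (k + 1 - (0)) y * ascP q y r (k + 1 + (0)) x) / qPoch (r ^ 2) q (k + 1 + (0))) := by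
          rw [htop, Finset.sum_sub_distrib, ← Finset.mul_sum]; ring
      _ = (∑ s ∈ range (k + 1), (1 - r ^ 2) * (1 - r ^ 2 * q) * ((-1 : ℝ) ^ (s + 1) * q ^ ((s + 1) * ((s + 1) - 1) / 2) * qBinom q (k + 1) (s + 1) * r ^ (s + 1) * qHermite q (k + 1 - (s + 1)) y * ascP q y r (k + 1 + (s + 1)) x / qPoch (r ^ 2) q (k + 1 + (s + 1)))) + ((1 - r ^ 2) * (1 - r ^ 2 * q) * ((-1 : ℝ) ^ (0) * q ^ ((0) * ((0) - 1) / 2) * qBinom q k (0) * (r * q) ^ (0) * qHermite q (k + 1 - (0)) y * ascP q y r (k + 1 + (0)) x) / qPoch (r ^ 2) q (k + 1 + (0))) := by rw [hsum]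
      _ = (∑ s ∈ range (k + 1), (1 - r ^ 2) * (1 - r ^ 2 * q) * ((-1 : ℝ) ^ (s + 1) * q ^ ((s + 1) * ((s + 1) - 1) / 2) * qBinom q (k + 1) (s + 1) * r ^ (s + 1) * qHermite q (k + 1 - (s + 1)) y * ascP q y r (k + 1 + (s + 1)) x / qPoch (r ^ 2) q (k + 1 + (s + 1)))) + (1 - r ^ 2) * (1 - r ^ 2 * q) * ((-1 : ℝ) ^ (0) * q ^ ((0) * ((0) - 1) / 2) * qBinom q (k + 1) (0) * r ^ (0) * qHermite q (k + 1 - (0)) y * ascP q y r (k + 1 + (0)) x / qPoch (r ^ 2) q (k + 1 + (0))) := by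
          rw [qBinom_zero hq k, qBinom_zero hq (k + 1)]; ring
      _ = ∑ s ∈ range (k + 2), (1 - r ^ 2) * (1 - r ^ 2 * q) * ((-1 : ℝ) ^ (s) * q ^ ((s) * ((s) - 1) / 2) * qBinom q (k + 1) (s) * r ^ (s) * qHermite q (k + 1 - (s)) y * ascP q y r (k + 1 + (s)) x / qPoch (r ^ 2) q (k + 1 + (s))) :=
          (Finset.sum_range_succ' (fun s => (1 - r ^ 2) * (1 - r ^ 2 * q) * ((-1 : ℝ) ^ (s) * q ^ ((s) * ((s) - 1) / 2) * qBinom q (k + 1) (s) * r ^ (s) * qHermite q (k + 1 - (s)) y * ascP q y r (k + 1 + (s)) x / qPoch (r ^ 2) q (k + 1 + (s)))) (k + 1)).symm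
      _ = (1 - r ^ 2) * (1 - r ^ 2 * q) * Qpoly q r (k + 1) (k + 1) x y := by
          rw [Qpoly, Finset.mul_sum]
  linear_combination hsplit + h2 - (1 - q) * r * h3

theorem main {x y : ℝ} (hq : |q| < 1) :
    ∀ (n : ℕ) (r : ℝ), |r| < 1 →
    (∏ j ∈ Finset.range n, Omg q x y (r * q ^ j)) =
      qPoch (r ^ 2) q (2 * n) * ∑ k ∈ Finset.range (n + 1),
        (-1 : ℝ) ^ k * qBinom q n k * q ^ (k * (k - 1) / 2) * (1 - q) ^ k * r ^ k *
          Qpoly q r k k x y := by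
  intro n
  induction n with
  | zero =>
    intro r hr
    rw [Finset.prod_range_zero, Finset.sum_range_one, show 2 * 0 = 0 from rfl]
    rw [show qPoch (r ^ 2) q 0 = 1 from rfl]
    rw [Qpoly, Finset.sum_range_one, qBinom_zero hq 0]
    rw [show qHermite q (0 - 0) y = 1 from rfl, show ascP q y r (0 + 0) x = 1 from rfl,
      show qPoch (r ^ 2) q (0 + 0) = 1 from rfl]
    norm_num
  | succ m ih =>
    intro r hr
    have hrq : |r * q| < 1 := by
      rw [abs_mul]
      nlinarith [abs_nonneg r, abs_nonneg q]
    have hstep := ih (r * q) hrq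
    have hpoch : qPoch (r ^ 2) q (2 * (m + 1)) =
        (1 - r ^ 2) * (1 - r ^ 2 * q) * qPoch ((r * q) ^ 2) q (2 * m) := by
      rw [show 2 * (m + 1) = 2 * m + 2 from by omega, qPoch_shift2,
        show r ^ 2 * q ^ 2 = (r * q) ^ 2 from by ring]
    have hsum : (∑ k ∈ range (m + 1),
          ((-1 : ℝ) ^ k * qBinom q m k * q ^ (k * (k - 1) / 2) * (1 - q) ^ k * (r * q) ^ k *
              Qpoly q r k k x y
            - (1 - q) * r * ((-1 : ℝ) ^ k * qBinom q m k * q ^ (k * (k - 1) / 2) * (1 - q) ^ k *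
              (r * q) ^ k * Qpoly q r (k + 1) (k + 1) x y))) =
        ∑ k ∈ range (m + 2),
          (-1 : ℝ) ^ k * qBinom q (m + 1) k * q ^ (k * (k - 1) / 2) * (1 - q) ^ k * r ^ k *
            Qpoly q r k k x y := by
      have htop : ((-1 : ℝ) ^ (m + 1) * qBinom q m (m + 1) * q ^ ((m + 1) * (m + 1 - 1) / 2) *
          (1 - q) ^ (m + 1) * (r * q) ^ (m + 1) * Qpoly q r (m + 1) (m + 1) x y) = 0 := by
        rw [qBinom_of_gt (Nat.lt_succ_self m)]; ring
      have hcell : ∀ k ∈ range (m + 1),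
          ((-1 : ℝ) ^ (k + 1) * qBinom q m (k + 1) * q ^ ((k + 1) * (k + 1 - 1) / 2) *
              (1 - q) ^ (k + 1) * (r * q) ^ (k + 1) * Qpoly q r (k + 1) (k + 1) x y
            - (1 - q) * r * ((-1 : ℝ) ^ k * qBinom q m k * q ^ (k * (k - 1) / 2) * (1 - q) ^ k *
              (r * q) ^ k * Qpoly q r (k + 1) (k + 1) x y)) =
          (-1 : ℝ) ^ (k + 1) * qBinom q (m + 1) (k + 1) * q ^ ((k + 1) * (k + 1 - 1) / 2) *
            (1 - q) ^ (k + 1) * r ^ (k + 1) * Qpoly q r (k + 1) (k + 1) x y := by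
        intro k hk
        rw [show (k + 1) * (k + 1 - 1) / 2 = k * (k - 1) / 2 + k from tri k]
        linear_combination (-((-1 : ℝ) ^ (k + 1) * q ^ (k * (k - 1) / 2) * q ^ k *
          (1 - q) ^ (k + 1) * r ^ (k + 1) * Qpoly q r (k + 1) (k + 1) x y)) *
          qBinom_pascal hq m k
      calc (∑ k ∈ range (m + 1),
            ((-1 : ℝ) ^ k * qBinom q m k * q ^ (k * (k - 1) / 2) * (1 - q) ^ k * (r * q) ^ k *
                Qpoly q r k k x y
              - (1 - q) * r * ((-1 : ℝ) ^ k * qBinom q m k * q ^ (k * (k - 1) / 2) * (1 - q) ^ k *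
                (r * q) ^ k * Qpoly q r (k + 1) (k + 1) x y)))
          = (∑ k ∈ range (m + 1),
              (-1 : ℝ) ^ k * qBinom q m k * q ^ (k * (k - 1) / 2) * (1 - q) ^ k * (r * q) ^ k *
                Qpoly q r k k x y)
            - ∑ k ∈ range (m + 1),
              (1 - q) * r * ((-1 : ℝ) ^ k * qBinom q m k * q ^ (k * (k - 1) / 2) * (1 - q) ^ k *
                (r * q) ^ k * Qpoly q r (k + 1) (k + 1) x y) := Finset.sum_sub_distrib _ _
        _ = ((∑ k ∈ range m,
              (-1 : ℝ) ^ (k + 1) * qBinom q m (k + 1) * q ^ ((k + 1) * (k + 1 - 1) / 2) *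
                (1 - q) ^ (k + 1) * (r * q) ^ (k + 1) * Qpoly q r (k + 1) (k + 1) x y)
            + (-1 : ℝ) ^ 0 * qBinom q m 0 * q ^ (0 * (0 - 1) / 2) * (1 - q) ^ 0 * (r * q) ^ 0 *
                Qpoly q r 0 0 x y)
            - ∑ k ∈ range (m + 1),
              (1 - q) * r * ((-1 : ℝ) ^ k * qBinom q m k * q ^ (k * (k - 1) / 2) * (1 - q) ^ k *
                (r * q) ^ k * Qpoly q r (k + 1) (k + 1) x y) := by
            rw [Finset.sum_range_succ' (fun k => (-1 : ℝ) ^ k * qBinom q m k *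
              q ^ (k * (k - 1) / 2) * (1 - q) ^ k * (r * q) ^ k * Qpoly q r k k x y) m]
        _ = ((∑ k ∈ range (m + 1),
              (-1 : ℝ) ^ (k + 1) * qBinom q m (k + 1) * q ^ ((k + 1) * (k + 1 - 1) / 2) *
                (1 - q) ^ (k + 1) * (r * q) ^ (k + 1) * Qpoly q r (k + 1) (k + 1) x y)
            + (-1 : ℝ) ^ 0 * qBinom q m 0 * q ^ (0 * (0 - 1) / 2) * (1 - q) ^ 0 * (r * q) ^ 0 *
                Qpoly q r 0 0 x y)
            - ∑ k ∈ range (m + 1),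
              (1 - q) * r * ((-1 : ℝ) ^ k * qBinom q m k * q ^ (k * (k - 1) / 2) * (1 - q) ^ k *
                (r * q) ^ k * Qpoly q r (k + 1) (k + 1) x y) := by
            rw [Finset.sum_range_succ (fun k => (-1 : ℝ) ^ (k + 1) * qBinom q m (k + 1) *
              q ^ ((k + 1) * (k + 1 - 1) / 2) * (1 - q) ^ (k + 1) * (r * q) ^ (k + 1) *
              Qpoly q r (k + 1) (k + 1) x y) m, htop]
            ring
        _ = (∑ k ∈ range (m + 1),
              ((-1 : ℝ) ^ (k + 1) * qBinom q m (k + 1) * q ^ ((k + 1) * (k + 1 - 1) / 2) *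
                (1 - q) ^ (k + 1) * (r * q) ^ (k + 1) * Qpoly q r (k + 1) (k + 1) x y
               - (1 - q) * r * ((-1 : ℝ) ^ k * qBinom q m k * q ^ (k * (k - 1) / 2) *
                (1 - q) ^ k * (r * q) ^ k * Qpoly q r (k + 1) (k + 1) x y)))
            + (-1 : ℝ) ^ 0 * qBinom q m 0 * q ^ (0 * (0 - 1) / 2) * (1 - q) ^ 0 * (r * q) ^ 0 *
                Qpoly q r 0 0 x y := by
            rw [Finset.sum_sub_distrib]; ring
        _ = (∑ k ∈ range (m + 1),
              (-1 : ℝ) ^ (k + 1) * qBinom q (m + 1) (k + 1) * q ^ ((k + 1) * (k + 1 - 1) / 2) *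
                (1 - q) ^ (k + 1) * r ^ (k + 1) * Qpoly q r (k + 1) (k + 1) x y)
            + (-1 : ℝ) ^ 0 * qBinom q m 0 * q ^ (0 * (0 - 1) / 2) * (1 - q) ^ 0 * (r * q) ^ 0 *
                Qpoly q r 0 0 x y := by
            rw [Finset.sum_congr rfl hcell]
        _ = (∑ k ∈ range (m + 1),
              (-1 : ℝ) ^ (k + 1) * qBinom q (m + 1) (k + 1) * q ^ ((k + 1) * (k + 1 - 1) / 2) *
                (1 - q) ^ (k + 1) * r ^ (k + 1) * Qpoly q r (k + 1) (k + 1) x y)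
            + (-1 : ℝ) ^ 0 * qBinom q (m + 1) 0 * q ^ (0 * (0 - 1) / 2) * (1 - q) ^ 0 * r ^ 0 *
                Qpoly q r 0 0 x y := by
            rw [qBinom_zero hq m, qBinom_zero hq (m + 1)]; ring
        _ = ∑ k ∈ range (m + 2),
              (-1 : ℝ) ^ k * qBinom q (m + 1) k * q ^ (k * (k - 1) / 2) * (1 - q) ^ k * r ^ k *
                Qpoly q r k k x y :=
            (Finset.sum_range_succ' (fun k => (-1 : ℝ) ^ k * qBinom q (m + 1) k *
              q ^ (k * (k - 1) / 2) * (1 - q) ^ k * r ^ k * Qpoly q r k k x y) (m + 1)).symm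
    calc ∏ j ∈ range (m + 1), Omg q x y (r * q ^ j)
        = (∏ j ∈ range m, Omg q x y (r * q ^ (j + 1))) * Omg q x y (r * q ^ 0) :=
          Finset.prod_range_succ' _ m
      _ = Omg q x y r * ∏ j ∈ range m, Omg q x y ((r * q) * q ^ j) := by
          rw [pow_zero, mul_one,
            Finset.prod_congr rfl fun j _ => by rw [show r * q ^ (j + 1) = (r * q) * q ^ j
              from by rw [pow_succ]; ring]]
          ring
      _ = Omg q x y r * (qPoch ((r * q) ^ 2) q (2 * m) * ∑ k ∈ range (m + 1),
            (-1 : ℝ) ^ k * qBinom q m k * q ^ (k * (k - 1) / 2) * (1 - q) ^ k * (r * q) ^ k *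
              Qpoly q (r * q) k k x y) := by rw [hstep]
      _ = qPoch ((r * q) ^ 2) q (2 * m) * ∑ k ∈ range (m + 1),
            (-1 : ℝ) ^ k * qBinom q m k * q ^ (k * (k - 1) / 2) * (1 - q) ^ k * (r * q) ^ k *
              (Omg q x y r * Qpoly q (r * q) k k x y) := by
          simp only [Finset.mul_sum]
          exact Finset.sum_congr rfl fun k hk => by ring
      _ = qPoch ((r * q) ^ 2) q (2 * m) * ∑ k ∈ range (m + 1),
            (-1 : ℝ) ^ k * qBinom q m k * q ^ (k * (k - 1) / 2) * (1 - q) ^ k * (r * q) ^ k *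
              ((1 - r ^ 2) * (1 - r ^ 2 * q) *
                (Qpoly q r k k x y - (1 - q) * r * Qpoly q r (k + 1) (k + 1) x y)) := by
          exact congrArg _ (Finset.sum_congr rfl fun k hk => by rw [key hq hr k])
      _ = qPoch (r ^ 2) q (2 * (m + 1)) * ∑ k ∈ range (m + 1),
            ((-1 : ℝ) ^ k * qBinom q m k * q ^ (k * (k - 1) / 2) * (1 - q) ^ k * (r * q) ^ k *
                Qpoly q r k k x y
              - (1 - q) * r * ((-1 : ℝ) ^ k * qBinom q m k * q ^ (k * (k - 1) / 2) * (1 - q) ^ k *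
                (r * q) ^ k * Qpoly q r (k + 1) (k + 1) x y)) := by
          rw [hpoch]
          simp only [Finset.mul_sum]
          exact Finset.sum_congr rfl fun k hk => by ring
      _ = qPoch (r ^ 2) q (2 * (m + 1)) * ∑ k ∈ range (m + 2),
            (-1 : ℝ) ^ k * qBinom q (m + 1) k * q ^ (k * (k - 1) / 2) * (1 - q) ^ k * r ^ k *
              Qpoly q r k k x y := by rw [hsum]

end S11

/-- ∏_{j=0}^{n-1} ω(x√(1-q)/2, y√(1-q)/2 | ρ q^j)
= (ρ²;q)_{2n} Σ_{k=0}^n (-1)^k [n choose k]_q q^{k(k-1)/2} (1-q)^k ρ^k Q_{k,k}(x,y|ρ,q). -/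
theorem statement11 (q ρ : ℝ) (hq : |q| < 1) (hρ : |ρ| < 1) (n : ℕ) (x y : ℝ) :
    (∏ j ∈ Finset.range n,
        omegaPM (x * Real.sqrt (1 - q) / 2) (y * Real.sqrt (1 - q) / 2) (ρ * q ^ j)) =
      qPoch (ρ ^ 2) q (2 * n) *
        ∑ k ∈ Finset.range (n + 1),
          (-1 : ℝ) ^ k * qBinom q n k * q ^ (k * (k - 1) / 2) * (1 - q) ^ k * ρ ^ k *
            Qpoly q ρ k k x y := by

  have homg : ∀ s : ℝ, omegaPM (x * Real.sqrt (1 - q) / 2) (y * Real.sqrt (1 - q) / 2) s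
      = S11.Omg q x y s := by
    intro s
    have h : Real.sqrt (1 - q) * Real.sqrt (1 - q) = 1 - q :=
      Real.mul_self_sqrt (by have := abs_lt.mp hq; linarith)
    rw [omegaPM, S11.Omg]
    linear_combination (-(s * (1 + s ^ 2) * x * y) + s ^ 2 * (x ^ 2 + y ^ 2)) * h
  rw [Finset.prod_congr rfl fun j _ => homg (ρ * q ^ j)]
  exact S11.main hq n ρ hρ
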